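/- Let A be a nonempty compact set in ℝ and define A(k) := (1/k)·(A + ⋯ + A) (Minkowski sum of k copies of A, scaled by 1/k). Then for every integer m ≥ 2, |A(m)| ≥ |A(m−1)|, i.e., the volume of the scaled Minkowski averages is nondecreasing in one dimension. -/

import Mathlib

open MeasureTheory Pointwise Finset

lemma mam_comb (n : ℕ) (hn : 1 ≤ n) (x z : ℕ → ℝ) (hx0 : ∀ j, 0 ≤ x j)
    (hz1 : ∀ j ∈ Finset.range (n+1), x j ≤ z j)
    (hz2 : ∀ j ∈ Finset.range n, x j ≤ z (j+1)) :
    ((n : ℝ) + 1) * ∑ j ∈ Finset.range n, x j ≤ (n : ℝ) * ∑ j ∈ Finset.range (n+1), z j := by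
  obtain ⟨k, hk, hkmax⟩ := Finset.exists_max_image (Finset.range n) x ⟨0, Finset.mem_range.2 hn⟩
  have hkn : k < n := Finset.mem_range.1 hk
  -- split the z-sum
  have hsplit : ∑ j ∈ Finset.range (n+1), z j
      = ∑ j ∈ Finset.range (k+1), z j + ∑ j ∈ Finset.Ico (k+1) (n+1), z j :=
    (Finset.sum_range_add_sum_Ico _ (by omega)).symm
  have h1 : ∑ j ∈ Finset.range (k+1), x j ≤ ∑ j ∈ Finset.range (k+1), z j := by
    apply Finset.sum_le_sum
    intro j hj
    have := Finset.mem_range.1 hj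
    exact hz1 j (Finset.mem_range.2 (by omega))
  have h2 : ∑ j ∈ Finset.Ico k n, x j ≤ ∑ j ∈ Finset.Ico (k+1) (n+1), z j := by
    rw [Finset.sum_Ico_eq_sum_range, Finset.sum_Ico_eq_sum_range]
    have : n + 1 - (k + 1) = n - k := by omega
    rw [this]
    apply Finset.sum_le_sum
    intro i hi
    have : k + 1 + i = (k + i) + 1 := by omega
    rw [this]
    exact hz2 (k + i) (Finset.mem_range.2 (by
      have := Finset.mem_range.1 hi; omega))
  have h3 : ∑ j ∈ Finset.range n, x j + x k
      ≤ ∑ j ∈ Finset.range (n+1), z j := by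
    have e1 : ∑ j ∈ Finset.range (k+1), x j + ∑ j ∈ Finset.Ico (k+1) n, x j
        = ∑ j ∈ Finset.range n, x j := Finset.sum_range_add_sum_Ico _ (by omega)
    have e2 : ∑ j ∈ Finset.Ico k n, x j = x k + ∑ j ∈ Finset.Ico (k+1) n, x j := by
      rw [← Finset.sum_eq_sum_Ico_succ_bot (by omega)]
    calc ∑ j ∈ Finset.range n, x j + x k
        = ∑ j ∈ Finset.range (k+1), x j + ∑ j ∈ Finset.Ico k n, x j := by
          rw [e2]; linarith [e1]
      _ ≤ ∑ j ∈ Finset.range (k+1), z j + ∑ j ∈ Finset.Ico (k+1) (n+1), z j :=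
          add_le_add h1 h2
      _ = ∑ j ∈ Finset.range (n+1), z j := hsplit.symm
  have h4 : ∑ j ∈ Finset.range n, x j ≤ (n : ℝ) * x k := by
    calc ∑ j ∈ Finset.range n, x j ≤ ∑ _j ∈ Finset.range n, x k :=
          Finset.sum_le_sum fun j hj => hkmax j hj
      _ = (n : ℝ) * x k := by simp [Finset.sum_const, nsmul_eq_mul]
  have hn' : (1:ℝ) ≤ (n:ℝ) := by exact_mod_cast hn
  nlinarith [h3, h4, hx0 k]

lemma mam_key (X Y : Set ℝ) (hXm : MeasurableSet X) (hYm : MeasurableSet Y)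
    (hXfin : volume X ≠ ⊤) (hYfin : volume Y ≠ ⊤)
    (t β : ℝ) (hβ : 0 < β) (n : ℕ) (hn : 1 ≤ n)
    (hX : X ⊆ Set.Icc t (t + n * β))
    (hY : X ∪ (β +ᵥ X) ⊆ Y) :
    ((n : ℝ) + 1) * (volume X).toReal ≤ (n : ℝ) * (volume Y).toReal := by
  set J : ℕ → Set ℝ := fun j => Set.Ico (t + j * β) (t + (j + 1) * β) with hJ
  have hJm : ∀ j, MeasurableSet (J j) := fun j => measurableSet_Ico
  have hJdisj : ∀ i j : ℕ, i ≠ j → Disjoint (J i) (J j) := by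
    have base : ∀ i j : ℕ, i < j → Disjoint (J i) (J j) := by
      intro i j hij
      apply Set.disjoint_left.2
      intro u hui huj
      have h1 : u < t + (i + 1) * β := hui.2
      have h2 : t + (j : ℝ) * β ≤ u := huj.1
      have : ((i : ℝ) + 1) ≤ (j : ℝ) := by exact_mod_cast hij
      nlinarith
    intro i j hij
    rcases lt_or_gt_of_ne hij with h | h
    · exact base i j h
    · exact (base j i h).symm
  have hXJfin : ∀ j, volume (X ∩ J j) ≠ ⊤ := fun j =>
    ne_top_of_le_ne_top hXfin (measure_mono Set.inter_subset_left)
  have hYJfin : ∀ j, volume (Y ∩ J j) ≠ ⊤ := fun j =>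
    ne_top_of_le_ne_top hYfin (measure_mono Set.inter_subset_left)
  set x : ℕ → ℝ := fun j => (volume (X ∩ J j)).toReal with hx
  set z : ℕ → ℝ := fun j => (volume (Y ∩ J j)).toReal with hz
  -- Claim A : |X| ≤ ∑ x j
  have claimA : (volume X).toReal ≤ ∑ j ∈ Finset.range n, x j := by
    have hcover : X ⊆ (⋃ j ∈ Finset.range n, X ∩ J j) ∪ {t + n * β} := by
      intro u hu
      obtain ⟨h1, h2⟩ := hX hu
      rcases eq_or_lt_of_le h2 with he | hlt
      · exact Or.inr (by simp [he])
      · left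
        set jz : ℤ := ⌊(u - t) / β⌋ with hjz
        have hnonneg : (0:ℝ) ≤ (u - t) / β := div_nonneg (by linarith) hβ.le
        have hjz0 : 0 ≤ jz := Int.floor_nonneg.2 hnonneg
        set j : ℕ := jz.toNat with hj
        have hjc : (j : ℝ) = (jz : ℝ) := by
          exact_mod_cast congrArg (Int.cast : ℤ → ℝ) (Int.toNat_of_nonneg hjz0)
        have hfl : (jz : ℝ) ≤ (u - t) / β := Int.floor_le _
        have hfu : (u - t) / β < (jz : ℝ) + 1 := Int.lt_floor_add_one _
        have hl : (j : ℝ) * β ≤ u - t := by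
          rw [hjc]; exact (le_div_iff₀ hβ).1 hfl
        have hr : u - t < ((j : ℝ) + 1) * β := by
          rw [hjc]; exact (div_lt_iff₀ hβ).1 hfu
        have hmem : u ∈ J j := ⟨by linarith, by linarith⟩
        have hjn : j < n := by
          have h3 : (j : ℝ) * β ≤ u - t := by
            rw [hjc]
            calc (jz:ℝ) * β ≤ ((u-t)/β) * β := by nlinarith
              _ = u - t := by field_simp
          have h4 : u - t < (n : ℝ) * β := by linarith
          have : (j : ℝ) < (n : ℝ) := by nlinarith
          exact_mod_cast this
        exact Set.mem_biUnion (Finset.mem_range.2 hjn) ⟨hu, hmem⟩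
    have hE : volume X ≤ ∑ j ∈ Finset.range n, volume (X ∩ J j) := by
      calc volume X ≤ volume ((⋃ j ∈ Finset.range n, X ∩ J j) ∪ {t + n * β}) :=
            measure_mono hcover
        _ ≤ volume (⋃ j ∈ Finset.range n, X ∩ J j) + volume ({t + n * β} : Set ℝ) :=
            measure_union_le _ _
        _ = volume (⋃ j ∈ Finset.range n, X ∩ J j) := by
            rw [Real.volume_singleton, add_zero]
        _ ≤ ∑ j ∈ Finset.range n, volume (X ∩ J j) := measure_biUnion_finset_le _ _
    calc (volume X).toReal ≤ (∑ j ∈ Finset.range n, volume (X ∩ J j)).toReal :=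
          ENNReal.toReal_mono (ENNReal.sum_ne_top.2 fun j _ => hXJfin j) hE
      _ = ∑ j ∈ Finset.range n, x j := ENNReal.toReal_sum (fun j _ => hXJfin j)
  -- Claim B1 : x j ≤ z j
  have hz1 : ∀ j ∈ Finset.range (n+1), x j ≤ z j := by
    intro j _
    apply ENNReal.toReal_mono (hYJfin j)
    exact measure_mono (Set.inter_subset_inter_left _ (fun u hu => hY (Or.inl hu)))
  -- Claim B2 : x j ≤ z (j+1)
  have hz2 : ∀ j ∈ Finset.range n, x j ≤ z (j+1) := by
    intro j _
    have hvadd : volume (X ∩ J j) = volume (β +ᵥ (X ∩ J j)) := (measure_vadd _ _ _).symm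
    have hsub : β +ᵥ (X ∩ J j) ⊆ Y ∩ J (j+1) := by
      rintro u ⟨w, ⟨hwX, hwJ⟩, rfl⟩
      refine ⟨hY (Or.inr ⟨w, hwX, rfl⟩), ?_, ?_⟩
      · have := hwJ.1
        simp only [vadd_eq_add]
        push_cast
        linarith
      · have := hwJ.2
        simp only [vadd_eq_add]
        push_cast
        linarith
    calc x j = (volume (β +ᵥ (X ∩ J j))).toReal := by rw [hx]; simp only []; rw [hvadd]
      _ ≤ z (j+1) := ENNReal.toReal_mono (hYJfin (j+1)) (measure_mono hsub)
  -- Claim C : ∑ z ≤ |Y|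
  have claimC : ∑ j ∈ Finset.range (n+1), z j ≤ (volume Y).toReal := by
    have hE : ∑ j ∈ Finset.range (n+1), volume (Y ∩ J j) ≤ volume Y := by
      rw [← measure_biUnion_finset (fun i _ j _ hij =>
        (hJdisj i j hij).mono Set.inter_subset_right Set.inter_subset_right)
        (fun j _ => hYm.inter (hJm j))]
      exact measure_mono (Set.iUnion₂_subset fun j _ => Set.inter_subset_left)
    calc ∑ j ∈ Finset.range (n+1), z j
        = (∑ j ∈ Finset.range (n+1), volume (Y ∩ J j)).toReal :=
          (ENNReal.toReal_sum fun j _ => hYJfin j).symm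
      _ ≤ (volume Y).toReal := ENNReal.toReal_mono hYfin hE
  have hx0 : ∀ j, 0 ≤ x j := fun j => ENNReal.toReal_nonneg
  have hcomb := mam_comb n hn x z hx0 hz1 hz2
  have hXnn : (0:ℝ) ≤ (volume X).toReal := ENNReal.toReal_nonneg
  have hn1 : (0:ℝ) < (n:ℝ) := by exact_mod_cast hn
  nlinarith [claimA, claimC, hcomb]

theorem minkowski_average_monotone (A : Set ℝ) (hA : A.Nonempty) (hAc : IsCompact A)
    (m : ℕ) (hm : 2 ≤ m) :
    volume (((m : ℝ)⁻¹) • ∑ _i ∈ Finset.range m, A) ≥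
      volume ((((m - 1 : ℕ) : ℝ)⁻¹) • ∑ _i ∈ Finset.range (m - 1), A) := by
  obtain ⟨n, rfl⟩ : ∃ n, m = n + 1 := ⟨m - 1, by omega⟩
  have hn : 1 ≤ n := by omega
  have hm1 : n + 1 - 1 = n := by omega
  rw [hm1]
  set S : ℕ → Set ℝ := fun k => ∑ _i ∈ Finset.range k, A with hS
  have hScomp : ∀ k, IsCompact (S k) := by
    intro k
    induction k with
    | zero =>
      have : S 0 = {0} := by rw [hS]; simp [Finset.sum_range_zero]; rfl
      rw [this]; exact isCompact_singleton
    | succ k ih =>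
      have : S (k+1) = S k + A := Finset.sum_range_succ (fun _ => A) k
      rw [this]; exact ih.add hAc
  have hSne : ∀ k, (S k).Nonempty := by
    intro k
    induction k with
    | zero => exact ⟨0, by simp [hS, Finset.sum_range_zero]⟩
    | succ k ih =>
      have : S (k+1) = S k + A := Finset.sum_range_succ (fun _ => A) k
      rw [this]; exact ih.add hA
  have hSmeas : ∀ k, MeasurableSet (S k) := fun k => (hScomp k).isClosed.measurableSet
  have hSfin : ∀ k, volume (S k) ≠ ⊤ := fun k => (hScomp k).measure_lt_top.ne
  -- rewrite smul volumes
  have hfr : Module.finrank ℝ ℝ = 1 := Module.finrank_self ℝ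
  have hsmul : ∀ (c : ℝ) (s : Set ℝ), 0 ≤ c →
      volume (c • s) = ENNReal.ofReal c * volume s := by
    intro c s hc
    rw [Measure.addHaar_smul_of_nonneg volume hc s, hfr, pow_one]
  have hminv : (0:ℝ) ≤ ((n:ℝ)+1)⁻¹ := by positivity
  have hninv : (0:ℝ) ≤ (n:ℝ)⁻¹ := by positivity
  have hcast : ((n+1 : ℕ) : ℝ) = (n:ℝ) + 1 := by push_cast; ring
  rw [ge_iff_le, hsmul _ _ (by positivity), hsmul _ _ (by positivity)]
  by_cases hzero : volume (S n) = 0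
  · rw [show (∑ _i ∈ Finset.range n, A) = S n from rfl, hzero, mul_zero]
    exact zero_le
  -- nondegenerate case
  set a := sInf A with ha
  set b := sSup A with hb
  have haA : a ∈ A := hAc.sInf_mem hA
  have hbA : b ∈ A := hAc.sSup_mem hA
  have hbdd : BddBelow A := hAc.bddBelow
  have hbdda : BddAbove A := hAc.bddAbove
  have hmemab : ∀ y ∈ A, a ≤ y ∧ y ≤ b := fun y hy => ⟨csInf_le hbdd hy, le_csSup hbdda hy⟩
  have hbound : ∀ k, S k ⊆ Set.Icc ((k:ℝ) * a) ((k:ℝ) * b) := by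
    intro k
    induction k with
    | zero => intro u hu; simp [hS, Finset.sum_range_zero] at hu; simp [hu]
    | succ k ih =>
      have hSk : S (k+1) = S k + A := Finset.sum_range_succ (fun _ => A) k
      rw [hSk]
      rintro u ⟨y, hy, w, hw, rfl⟩
      obtain ⟨h1, h2⟩ := ih hy
      obtain ⟨h3, h4⟩ := hmemab w hw
      constructor
      · push_cast; nlinarith
      · push_cast; nlinarith
  have hab : a < b := by
    by_contra hcon
    push_neg at hcon
    have hba : a = b := le_antisymm (hmemab b hbA).1 hcon
    have : S n ⊆ {(n:ℝ) * a} := by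
      intro u hu
      obtain ⟨h1, h2⟩ := hbound n hu
      rw [← hba] at h2
      exact le_antisymm h2 h1
    exact hzero (le_antisymm (le_trans (measure_mono this)
      (le_of_eq Real.volume_singleton)) zero_le)
  set β := b - a with hβdef
  have hβ : 0 < β := by simp [hβdef]; linarith
  -- apply key lemma with X = a +ᵥ S n
  have hkey := mam_key (a +ᵥ S n) (S (n+1))
    ((hSmeas n).const_vadd a)
    (hSmeas (n+1))
    (by rw [measure_vadd]; exact hSfin n)
    (hSfin (n+1))
    (a + (n:ℝ) * a) β hβ n hn
    (by
      rintro u ⟨w, hw, rfl⟩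
      obtain ⟨h1, h2⟩ := hbound n hw
      simp only [vadd_eq_add]
      constructor
      · linarith
      · have : (n:ℝ) * β = (n:ℝ) * b - (n:ℝ) * a := by rw [hβdef]; ring
        linarith [this]
    )
    (by
      have hSn1 : S (n+1) = S n + A := Finset.sum_range_succ (fun _ => A) n
      rintro u (⟨w, hw, rfl⟩ | hu)
      · rw [hSn1]
        exact ⟨w, hw, a, haA, by simp [vadd_eq_add]; ring⟩
      · obtain ⟨v, ⟨w, hw, rfl⟩, rfl⟩ := hu
        rw [hSn1]
        refine ⟨w, hw, b, hbA, ?_⟩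
        simp only [vadd_eq_add, hβdef]
        ring)
  rw [measure_vadd] at hkey
  -- conclude
  have e1 : ENNReal.ofReal ((n:ℝ))⁻¹ * volume (S n)
      = ENNReal.ofReal ((n:ℝ)⁻¹ * (volume (S n)).toReal) := by
    rw [ENNReal.ofReal_mul hninv, ENNReal.ofReal_toReal (hSfin n)]
  have e2 : ENNReal.ofReal (((n+1:ℕ):ℝ))⁻¹ * volume (S (n+1))
      = ENNReal.ofReal (((n:ℝ)+1)⁻¹ * (volume (S (n+1))).toReal) := by
    rw [hcast, ENNReal.ofReal_mul hminv, ENNReal.ofReal_toReal (hSfin (n+1))]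
  rw [show (∑ _i ∈ Finset.range n, A) = S n from rfl,
    show (∑ _i ∈ Finset.range (n+1), A) = S (n+1) from rfl, e1, e2]
  apply ENNReal.ofReal_le_ofReal
  have hn0 : (0:ℝ) < (n:ℝ) := by exact_mod_cast hn
  have hm0 : (0:ℝ) < (n:ℝ) + 1 := by linarith
  rw [inv_mul_eq_div, inv_mul_eq_div, div_le_div_iff₀ hn0 hm0]
  nlinarith [hkey]
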